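/- Let φ be a Schwartz function on ℝⁿ. For each integer i and points x, y, x₀ with |x - x₀ - θ(y - x₀)| comparable to |x - x₀| for θ ∈ [0,1], the 2-variation over t ∈ (2^i, 2^{i+1}] of {φ_t(x-y) - φ_t(x-x₀)} is at most C |y - x₀| · min{2^{i+1} |x - x₀|^{-(n+2)}, 2^{-i(n+1)}}. -/

import Mathlib

set_option maxHeartbeats 1000000

open scoped ENNReal SchwartzMap

/-- The `ρ`-variation norm of `{a t : t ∈ I}`. -/
noncomputable def variationNorm (ρ : ℝ) (I : Set ℝ) (a : ℝ → ℂ) : ℝ≥0∞ :=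
  ⨆ (n : ℕ) (t : ℕ → ℝ) (_ : ∀ k, k ≤ n → t k ∈ I) (_ : ∀ k, k < n → t (k + 1) < t k),
    ENNReal.ofReal ((∑ k ∈ Finset.range n, ‖a (t (k + 1)) - a (t k)‖ ^ ρ) ^ (1 / ρ))

section Aux

variable {n : ℕ}

noncomputable abbrev VarAux.E (n : ℕ) := EuclideanSpace ℝ (Fin n)

namespace VarAux

lemma variationNorm_two_le_of_lip {A B L : ℝ} (hAB : A ≤ B) (hL : 0 ≤ L) (a : ℝ → ℂ)
    (h : ∀ s ∈ Set.Ioc A B, ∀ t ∈ Set.Ioc A B, t ≤ s → ‖a s - a t‖ ≤ L * (s - t)) :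
    variationNorm 2 (Set.Ioc A B) a ≤ ENNReal.ofReal (L * (B - A)) := by
  unfold variationNorm
  refine iSup_le fun N => iSup_le fun t => iSup_le fun hmem => iSup_le fun hdec => ?_
  refine ENNReal.ofReal_le_ofReal ?_
  have hc : 0 ≤ L * (B - A) := mul_nonneg hL (by linarith)
  have hgap : ∀ k < N, ‖a (t (k + 1)) - a (t k)‖ ≤ L * (t k - t (k + 1)) := by
    intro k hk
    rw [norm_sub_rev]
    exact h (t k) (hmem k hk.le) (t (k + 1)) (hmem (k + 1) hk) (hdec k hk).le
  have hsum : ∑ k ∈ Finset.range N, ‖a (t (k + 1)) - a (t k)‖ ≤ L * (B - A) := by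
    calc ∑ k ∈ Finset.range N, ‖a (t (k + 1)) - a (t k)‖
        ≤ ∑ k ∈ Finset.range N, L * (t k - t (k + 1)) :=
          Finset.sum_le_sum fun k hk => hgap k (Finset.mem_range.mp hk)
      _ = L * (t 0 - t N) := by rw [← Finset.mul_sum, Finset.sum_range_sub']
      _ ≤ L * (B - A) := by
          have h0 : t 0 ≤ B := (hmem 0 (Nat.zero_le N)).2
          have hN : A < t N := (hmem N le_rfl).1
          exact mul_le_mul_of_nonneg_left (by linarith) hL
  have hsq : ∑ k ∈ Finset.range N, ‖a (t (k + 1)) - a (t k)‖ ^ (2 : ℝ)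
      ≤ (L * (B - A)) ^ 2 := by
    have : ∀ k ∈ Finset.range N, ‖a (t (k + 1)) - a (t k)‖ ^ (2 : ℝ)
        = ‖a (t (k + 1)) - a (t k)‖ ^ (2 : ℕ) := by
      intro k _
      rw [show (2 : ℝ) = ((2 : ℕ) : ℝ) by norm_num, Real.rpow_natCast]
    rw [Finset.sum_congr rfl this]
    calc ∑ k ∈ Finset.range N, ‖a (t (k + 1)) - a (t k)‖ ^ (2 : ℕ)
        ≤ (∑ k ∈ Finset.range N, ‖a (t (k + 1)) - a (t k)‖) ^ 2 :=
          Finset.sum_sq_le_sq_sum_of_nonneg fun k _ => norm_nonneg _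
      _ ≤ (L * (B - A)) ^ 2 := by
          apply pow_le_pow_left₀ (Finset.sum_nonneg fun k _ => norm_nonneg _) hsum
  calc (∑ k ∈ Finset.range N, ‖a (t (k + 1)) - a (t k)‖ ^ (2 : ℝ)) ^ (1 / (2 : ℝ))
      ≤ ((L * (B - A)) ^ 2) ^ (1 / (2 : ℝ)) := by
        apply Real.rpow_le_rpow ?_ hsq (by norm_num)
        exact Finset.sum_nonneg fun k _ => Real.rpow_nonneg (norm_nonneg _) _
    _ = L * (B - A) := by
        rw [show ((L * (B - A)) ^ 2 = (L * (B - A)) ^ ((2 : ℕ) : ℝ)) from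
          (Real.rpow_natCast _ 2).symm, ← Real.rpow_mul hc]
        norm_num

noncomputable def kk (φ : 𝓢(E n, ℂ)) (z w : E n) (r : ℝ) : ℂ :=
  (r ^ n)⁻¹ • ((fderiv ℝ (φ : E n → ℂ) (r⁻¹ • z)) (r⁻¹ • w))

noncomputable def KK (φ : 𝓢(E n, ℂ)) (z w : E n) (r : ℝ) : ℂ :=
  (r ^ n)⁻¹ • ((fderiv ℝ (fderiv ℝ (φ : E n → ℂ)) (r⁻¹ • z)) ((-(r ^ 2)⁻¹) • z) (r⁻¹ • w)
      + (fderiv ℝ (φ : E n → ℂ) (r⁻¹ • z)) ((-(r ^ 2)⁻¹) • w))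
    + (-(↑n * r ^ (n - 1)) / (r ^ n) ^ 2) • ((fderiv ℝ (φ : E n → ℂ) (r⁻¹ • z)) (r⁻¹ • w))

lemma kk_hasDerivAt (φ : 𝓢(E n, ℂ)) (z w : E n) {r : ℝ} (hr : 0 < r) :
    HasDerivAt (kk φ z w) (KK φ z w r) r := by
  have hφ : ContDiff ℝ (⊤ : ℕ∞) (φ : E n → ℂ) := φ.smooth ⊤
  have hφ1 : Differentiable ℝ (φ : E n → ℂ) := hφ.differentiable (by simp)
  have hφ' : ContDiff ℝ (⊤ : ℕ∞) (fderiv ℝ (φ : E n → ℂ)) := (contDiff_infty_iff_fderiv.mp hφ).2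
  have hφ'1 : Differentiable ℝ (fderiv ℝ (φ : E n → ℂ)) :=
    hφ'.differentiable (by simp)
  have hrne : r ≠ 0 := hr.ne'
  have hc : HasDerivAt (fun r : ℝ => r⁻¹ • z) ((-(r ^ 2)⁻¹) • z) r :=
    (hasDerivAt_inv hrne).smul_const _
  have hd : HasDerivAt (fun r : ℝ => r⁻¹ • w) ((-(r ^ 2)⁻¹) • w) r :=
    (hasDerivAt_inv hrne).smul_const _
  have hG : HasDerivAt (fun r : ℝ => fderiv ℝ (φ : E n → ℂ) (r⁻¹ • z))
      ((fderiv ℝ (fderiv ℝ (φ : E n → ℂ)) (r⁻¹ • z)) ((-(r ^ 2)⁻¹) • z)) r :=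
    (hφ'1 _).hasFDerivAt.comp_hasDerivAt r hc
  have happ := hG.clm_apply hd
  have hg1 : HasDerivAt (fun r : ℝ => (r ^ n)⁻¹) (-(↑n * r ^ (n - 1)) / (r ^ n) ^ 2) r :=
    (hasDerivAt_pow n r).inv (pow_ne_zero _ hrne)
  exact hg1.smul happ

lemma fderiv_norm_eq (φ : 𝓢(E n, ℂ)) (p : E n) :
    ‖fderiv ℝ (φ : E n → ℂ) p‖ = ‖iteratedFDeriv ℝ 1 (φ : E n → ℂ) p‖ := by
  rw [← norm_iteratedFDeriv_fderiv (n := 0), norm_iteratedFDeriv_zero]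

lemma fderiv2_norm_eq (φ : 𝓢(E n, ℂ)) (p : E n) :
    ‖fderiv ℝ (fderiv ℝ (φ : E n → ℂ)) p‖ = ‖iteratedFDeriv ℝ 2 (φ : E n → ℂ) p‖ := by
  rw [← norm_iteratedFDeriv_fderiv (n := 1), ← norm_iteratedFDeriv_fderiv (n := 0),
    norm_iteratedFDeriv_zero]

lemma KK_bound (φ : 𝓢(E n, ℂ)) (z w : E n) {r : ℝ} (hr : 0 < r) :
    ‖KK φ z w r‖ ≤ (((n : ℝ) + 1) * ‖fderiv ℝ (φ : E n → ℂ) (r⁻¹ • z)‖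
        + ‖fderiv ℝ (fderiv ℝ (φ : E n → ℂ)) (r⁻¹ • z)‖ * (r⁻¹ * ‖z‖)) * ‖w‖ / r ^ (n + 2) := by
  have hrne : r ≠ 0 := hr.ne'
  set A1 := ‖fderiv ℝ (φ : E n → ℂ) (r⁻¹ • z)‖ with hA1
  set A2 := ‖fderiv ℝ (fderiv ℝ (φ : E n → ℂ)) (r⁻¹ • z)‖ with hA2
  have hA1n : 0 ≤ A1 := norm_nonneg _
  have hA2n : 0 ≤ A2 := by rw [hA2]; positivity
  have hzsm : ‖(-(r ^ 2)⁻¹) • z‖ = (r ^ 2)⁻¹ * ‖z‖ := by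
    rw [norm_smul, Real.norm_eq_abs, abs_neg, abs_of_pos (by positivity)]
  have hwsm : ‖(-(r ^ 2)⁻¹) • w‖ = (r ^ 2)⁻¹ * ‖w‖ := by
    rw [norm_smul, Real.norm_eq_abs, abs_neg, abs_of_pos (by positivity)]
  have hwr : ‖r⁻¹ • w‖ = r⁻¹ * ‖w‖ := by
    rw [norm_smul, Real.norm_eq_abs, abs_of_pos (by positivity)]
  have hX : ‖(fderiv ℝ (fderiv ℝ (φ : E n → ℂ)) (r⁻¹ • z)) ((-(r ^ 2)⁻¹) • z) (r⁻¹ • w)‖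
      ≤ A2 * ((r ^ 2)⁻¹ * ‖z‖) * (r⁻¹ * ‖w‖) := by
    calc ‖(fderiv ℝ (fderiv ℝ (φ : E n → ℂ)) (r⁻¹ • z)) ((-(r ^ 2)⁻¹) • z) (r⁻¹ • w)‖
        ≤ ‖(fderiv ℝ (fderiv ℝ (φ : E n → ℂ)) (r⁻¹ • z)) ((-(r ^ 2)⁻¹) • z)‖ * ‖r⁻¹ • w‖ :=
          ContinuousLinearMap.le_opNorm _ _
      _ ≤ (A2 * ‖(-(r ^ 2)⁻¹) • z‖) * ‖r⁻¹ • w‖ := by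
          gcongr
          exact ContinuousLinearMap.le_opNorm _ _
      _ = A2 * ((r ^ 2)⁻¹ * ‖z‖) * (r⁻¹ * ‖w‖) := by rw [hzsm, hwr]
  have hY : ‖(fderiv ℝ (φ : E n → ℂ) (r⁻¹ • z)) ((-(r ^ 2)⁻¹) • w)‖ ≤ A1 * ((r ^ 2)⁻¹ * ‖w‖) := by
    calc ‖(fderiv ℝ (φ : E n → ℂ) (r⁻¹ • z)) ((-(r ^ 2)⁻¹) • w)‖
        ≤ A1 * ‖(-(r ^ 2)⁻¹) • w‖ := ContinuousLinearMap.le_opNorm _ _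
      _ = A1 * ((r ^ 2)⁻¹ * ‖w‖) := by rw [hwsm]
  have hZ : ‖(fderiv ℝ (φ : E n → ℂ) (r⁻¹ • z)) (r⁻¹ • w)‖ ≤ A1 * (r⁻¹ * ‖w‖) := by
    calc ‖(fderiv ℝ (φ : E n → ℂ) (r⁻¹ • z)) (r⁻¹ • w)‖
        ≤ A1 * ‖r⁻¹ • w‖ := ContinuousLinearMap.le_opNorm _ _
      _ = A1 * (r⁻¹ * ‖w‖) := by rw [hwr]
  have hmain : ‖KK φ z w r‖ ≤ (r ^ n)⁻¹ * (A2 * ((r ^ 2)⁻¹ * ‖z‖) * (r⁻¹ * ‖w‖)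
      + A1 * ((r ^ 2)⁻¹ * ‖w‖)) + ((n : ℝ) * r ^ (n - 1) / (r ^ n) ^ 2) * (A1 * (r⁻¹ * ‖w‖)) := by
    unfold KK
    calc ‖_ + _‖ ≤ ‖((r:ℝ) ^ n)⁻¹ • ((fderiv ℝ (fderiv ℝ (φ : E n → ℂ)) (r⁻¹ • z)) ((-(r ^ 2)⁻¹) • z) (r⁻¹ • w)
            + (fderiv ℝ (φ : E n → ℂ) (r⁻¹ • z)) ((-(r ^ 2)⁻¹) • w))‖
          + ‖(-((n : ℝ) * r ^ (n - 1)) / (r ^ n) ^ 2) • ((fderiv ℝ (φ : E n → ℂ) (r⁻¹ • z)) (r⁻¹ • w))‖ :=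
        norm_add_le _ _
      _ ≤ (r ^ n)⁻¹ * (A2 * ((r ^ 2)⁻¹ * ‖z‖) * (r⁻¹ * ‖w‖) + A1 * ((r ^ 2)⁻¹ * ‖w‖))
          + ((n : ℝ) * r ^ (n - 1) / (r ^ n) ^ 2) * (A1 * (r⁻¹ * ‖w‖)) := by
        gcongr ?_ + ?_
        · rw [norm_smul, Real.norm_eq_abs, abs_of_pos (by positivity : (0:ℝ) < (r ^ n)⁻¹)]
          gcongr
          exact (norm_add_le _ _).trans (by gcongr)
        · rw [norm_smul, Real.norm_eq_abs, abs_div, abs_neg,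
            abs_of_nonneg (by positivity : (0:ℝ) ≤ (n : ℝ) * r ^ (n - 1)),
            abs_of_pos (by positivity : (0:ℝ) < ((r:ℝ) ^ n) ^ 2)]
          gcongr
  refine hmain.trans (le_of_eq ?_)
  have hpow : (n : ℝ) * r ^ (n - 1) / (r ^ n) ^ 2 = (n : ℝ) / r ^ (n + 1) := by
    cases n with
    | zero => simp
    | succ m =>
      rw [Nat.succ_sub_one]
      field_simp
      ring
  rw [hpow]
  field_simp
  ring

lemma KK_le (φ : 𝓢(E n, ℂ)) {Ca1 Ca2 Cb1 Cb2 : ℝ}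
    (hCa1n : 0 ≤ Ca1) (hCa2n : 0 ≤ Ca2)
    (hCa1 : ∀ p, ‖p‖ ^ (n + 2) * ‖iteratedFDeriv ℝ 1 (φ : E n → ℂ) p‖ ≤ Ca1)
    (hCa2 : ∀ p, ‖p‖ ^ (n + 3) * ‖iteratedFDeriv ℝ 2 (φ : E n → ℂ) p‖ ≤ Ca2)
    (hCb1 : ∀ p, ‖p‖ ^ 0 * ‖iteratedFDeriv ℝ 1 (φ : E n → ℂ) p‖ ≤ Cb1)
    (hCb2 : ∀ p, ‖p‖ ^ 1 * ‖iteratedFDeriv ℝ 2 (φ : E n → ℂ) p‖ ≤ Cb2)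
    (z w : E n) {r ν : ℝ} (hr : 0 < r) (hν : 0 < ν) (hz : ν ≤ ‖z‖) :
    ‖KK φ z w r‖ ≤ (((n : ℝ) + 1) * (Ca1 + Cb1) + (Ca2 + Cb2)) * ‖w‖ *
      min ((ν ^ (n + 2))⁻¹) ((r ^ (n + 2))⁻¹) := by
  have hzpos : (0 : ℝ) < ‖z‖ := lt_of_lt_of_le hν hz
  have hP : (0 : ℝ) < r ^ (n + 2) := by positivity
  have hQ : (0 : ℝ) < ‖z‖ ^ (n + 2) := by positivity
  set ζ := r⁻¹ • z with hζdef
  set A1 := ‖fderiv ℝ (φ : E n → ℂ) ζ‖ with hA1def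
  set A2 := ‖fderiv ℝ (fderiv ℝ (φ : E n → ℂ)) ζ‖ with hA2def
  have hA1n : 0 ≤ A1 := norm_nonneg _
  have hA2n : 0 ≤ A2 := by rw [hA2def]; positivity
  have hζ : ‖ζ‖ = r⁻¹ * ‖z‖ := by
    rw [hζdef, norm_smul, Real.norm_eq_abs, abs_of_pos (by positivity)]
  have hA1eq : A1 = ‖iteratedFDeriv ℝ 1 (φ : E n → ℂ) ζ‖ := fderiv_norm_eq φ ζ
  have hA2eq : A2 = ‖iteratedFDeriv ℝ 2 (φ : E n → ℂ) ζ‖ := fderiv2_norm_eq φ ζ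
  have hb1 : A1 ≤ Cb1 := by have := hCb1 ζ; rwa [pow_zero, one_mul, ← hA1eq] at this
  have hb2 : A2 * (r⁻¹ * ‖z‖) ≤ Cb2 := by
    have := hCb2 ζ; rw [pow_one, ← hA2eq, hζ] at this; linarith
  have hCb1n : 0 ≤ Cb1 := le_trans hA1n hb1
  have hCb2n : 0 ≤ Cb2 := by
    have h := hCb2 ζ
    have : 0 ≤ ‖ζ‖ ^ 1 * ‖iteratedFDeriv ℝ 2 (φ : E n → ℂ) ζ‖ := by positivity
    linarith
  have ha1 : A1 * ‖z‖ ^ (n + 2) ≤ Ca1 * r ^ (n + 2) := by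
    have h := hCa1 ζ
    rw [← hA1eq, hζ] at h
    calc A1 * ‖z‖ ^ (n + 2) = ((r⁻¹ * ‖z‖) ^ (n + 2) * A1) * r ^ (n + 2) := by
          rw [mul_pow, inv_pow]; field_simp
      _ ≤ Ca1 * r ^ (n + 2) := mul_le_mul_of_nonneg_right h hP.le
  have ha2 : A2 * (r⁻¹ * ‖z‖) * ‖z‖ ^ (n + 2) ≤ Ca2 * r ^ (n + 2) := by
    have h := hCa2 ζ
    rw [← hA2eq, hζ] at h
    have h2' : A2 * ‖z‖ ^ (n + 3) ≤ Ca2 * r ^ (n + 3) := by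
      calc A2 * ‖z‖ ^ (n + 3) = ((r⁻¹ * ‖z‖) ^ (n + 3) * A2) * r ^ (n + 3) := by
            rw [mul_pow, inv_pow]; field_simp
        _ ≤ Ca2 * r ^ (n + 3) := mul_le_mul_of_nonneg_right h (by positivity)
    have h2'' : A2 * (‖z‖ ^ (n + 2) * ‖z‖) ≤ Ca2 * (r ^ (n + 2) * r) := by
      rw [← pow_succ, ← pow_succ]; exact h2'
    calc A2 * (r⁻¹ * ‖z‖) * ‖z‖ ^ (n + 2) = (A2 * (‖z‖ ^ (n + 2) * ‖z‖)) * r⁻¹ := by ring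
      _ ≤ (Ca2 * (r ^ (n + 2) * r)) * r⁻¹ :=
          mul_le_mul_of_nonneg_right h2'' (inv_nonneg.mpr hr.le)
      _ = Ca2 * r ^ (n + 2) := by field_simp
  have hKKb := (KK_bound φ z w hr)
  rw [← hζdef, ← hA1def, ← hA2def] at hKKb
  set T := ((n : ℝ) + 1) * A1 + A2 * (r⁻¹ * ‖z‖) with hTdef
  have hTn : 0 ≤ T := by positivity
  set C₀ := ((n : ℝ) + 1) * (Ca1 + Cb1) + (Ca2 + Cb2) with hC₀def
  have hC₀n : 0 ≤ C₀ := by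
    have hn1 : (0:ℝ) ≤ (n : ℝ) + 1 := by positivity
    rw [hC₀def]; nlinarith
  rw [mul_min_of_nonneg _ _ (mul_nonneg hC₀n (norm_nonneg w))]
  refine le_min ?_ ?_
  · have step1 : T * ‖w‖ / r ^ (n + 2) ≤ (((n : ℝ) + 1) * Ca1 + Ca2) * ‖w‖ / ‖z‖ ^ (n + 2) := by
      rw [div_le_div_iff₀ hP hQ, hTdef]
      have e1 := mul_le_mul_of_nonneg_right ha1 (norm_nonneg w)
      have e2 := mul_le_mul_of_nonneg_right ha2 (norm_nonneg w)
      have hn1 : (0:ℝ) ≤ (n : ℝ) + 1 := by positivity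
      nlinarith [mul_le_mul_of_nonneg_left e1 hn1, e2]
    have step2 : (((n : ℝ) + 1) * Ca1 + Ca2) * ‖w‖ / ‖z‖ ^ (n + 2)
        ≤ C₀ * ‖w‖ * (ν ^ (n + 2))⁻¹ := by
      rw [div_eq_mul_inv]
      have hcoef : ((n : ℝ) + 1) * Ca1 + Ca2 ≤ C₀ := by
        have hn1 : (0:ℝ) ≤ (n : ℝ) + 1 := by positivity
        rw [hC₀def]; nlinarith
      have hinv : (‖z‖ ^ (n + 2))⁻¹ ≤ (ν ^ (n + 2))⁻¹ := by
        have := pow_le_pow_left₀ hν.le hz (n + 2)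
        exact inv_anti₀ (pow_pos hν _) this
      exact mul_le_mul (mul_le_mul_of_nonneg_right hcoef (norm_nonneg w)) hinv
        (by positivity) (mul_nonneg hC₀n (norm_nonneg w))
    exact hKKb.trans (step1.trans step2)
  · refine hKKb.trans ?_
    rw [div_eq_mul_inv]
    have hTC : T ≤ C₀ := by
      have hn1 : (0:ℝ) ≤ (n : ℝ) + 1 := by positivity
      rw [hTdef, hC₀def]; nlinarith
    exact mul_le_mul_of_nonneg_right (mul_le_mul_of_nonneg_right hTC (norm_nonneg w))
      (inv_nonneg.mpr hP.le)

lemma psi_hasDerivAt (φ : 𝓢(E n, ℂ)) (v w : E n) {r : ℝ} (hr : 0 < r) (θ : ℝ) :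
    HasDerivAt (fun θ : ℝ => (r ^ n)⁻¹ • (φ (r⁻¹ • (v - θ • w)) : ℂ))
      (-(kk φ (v - θ • w) w r)) θ := by
  have hφ1 : Differentiable ℝ (φ : E n → ℂ) :=
    (φ.smooth ⊤).differentiable (by simp)
  have hm : HasDerivAt (fun θ : ℝ => r⁻¹ • (v - θ • w)) (r⁻¹ • -((1:ℝ) • w)) θ :=
    (((hasDerivAt_id θ).smul_const w).const_sub v).const_smul r⁻¹
  have hcomp := (hφ1 (r⁻¹ • (v - θ • w))).hasFDerivAt.comp_hasDerivAt θ hm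
  have heq : (fderiv ℝ (φ : E n → ℂ) (r⁻¹ • (v - θ • w))) (r⁻¹ • -((1:ℝ) • w))
      = -((fderiv ℝ (φ : E n → ℂ) (r⁻¹ • (v - θ • w))) (r⁻¹ • w)) := by
    rw [one_smul, smul_neg, map_neg]
  rw [heq] at hcomp
  have hfin := hcomp.const_smul ((r:ℝ) ^ n)⁻¹
  simpa [kk, smul_neg, Function.comp, Pi.smul_def] using hfin

end VarAux

end Aux

open VarAux in
/-- For a Schwartz function `φ` on `ℝⁿ`, integers `i` and points with
`|x - x₀ - θ(y - x₀)| ∼ |x - x₀|` for `θ ∈ [0,1]`, the 2-variation over `t ∈ (2^i, 2^{i+1}]`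
of `{φ_t(x-y) - φ_t(x-x₀)}` is at most
`C |y - x₀| · min(2^{i+1} |x - x₀|^{-(n+2)}, 2^{-i(n+1)})`. -/
theorem variation_two_dyadic_kernel_bound (n : ℕ)
    (φ : 𝓢(EuclideanSpace ℝ (Fin n), ℂ)) :
    ∃ C : ℝ, 0 < C ∧ ∀ (i : ℤ) (x y x₀ : EuclideanSpace ℝ (Fin n)),
      (∀ θ ∈ Set.Icc (0 : ℝ) 1,
        ‖x - x₀‖ / 2 ≤ ‖x - x₀ - θ • (y - x₀)‖ ∧ ‖x - x₀ - θ • (y - x₀)‖ ≤ 2 * ‖x - x₀‖) →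
      variationNorm 2 (Set.Ioc ((2 : ℝ) ^ i) ((2 : ℝ) ^ (i + 1)))
          (fun t => ((t ^ n : ℝ))⁻¹ • (φ (t⁻¹ • (x - y)) - φ (t⁻¹ • (x - x₀))))
        ≤ ENNReal.ofReal (C * ‖y - x₀‖ *
            min ((2 : ℝ) ^ (i + 1) * ‖x - x₀‖ ^ (-((n : ℝ) + 2)))
              ((2 : ℝ) ^ (-((i : ℝ)) * ((n : ℝ) + 1)))) := by

  obtain ⟨Ca1, hCa1p, hCa1⟩ := φ.decay (n + 2) 1
  obtain ⟨Ca2, hCa2p, hCa2⟩ := φ.decay (n + 3) 2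
  obtain ⟨Cb1, hCb1p, hCb1⟩ := φ.decay 0 1
  obtain ⟨Cb2, hCb2p, hCb2⟩ := φ.decay 1 2
  set C₀ := ((n : ℝ) + 1) * (Ca1 + Cb1) + (Ca2 + Cb2) with hC₀def
  have hC₀p : 0 < C₀ := by
    have hn1 : (0:ℝ) ≤ (n : ℝ) + 1 := by positivity
    rw [hC₀def]; nlinarith
  refine ⟨C₀ * 2 ^ (n + 2) + 1, by positivity, ?_⟩
  intro i x y x₀ hcomp
  have h2i : (0:ℝ) < (2:ℝ) ^ i := by positivity
  have h2i1 : ((2:ℝ) ^ (i + 1) : ℝ) = 2 * 2 ^ i := by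
    rw [zpow_add₀ (two_ne_zero) i 1, zpow_one]; ring
  set v := x - x₀ with hvdef
  set w := y - x₀ with hwdef
  by_cases hv : v = 0
  · -- degenerate case : x = x₀ forces y = x₀ and the function vanishes
    have hw0 : w = 0 := by
      have h1 := (hcomp 1 (by constructor <;> norm_num)).2
      rw [hv, one_smul, norm_zero, zero_sub, norm_neg, mul_zero] at h1
      exact norm_le_zero_iff.mp h1
    have hyx : y = x₀ := by rwa [hwdef, sub_eq_zero] at hw0
    have hfun0 : (fun t : ℝ => ((t ^ n : ℝ))⁻¹ • (φ (t⁻¹ • (x - y)) - φ (t⁻¹ • v)))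
        = fun _ => (0 : ℂ) := by
      funext t
      rw [hyx, ← hvdef, sub_self, smul_zero]
    rw [hfun0]
    have hz : variationNorm 2 (Set.Ioc ((2:ℝ) ^ i) ((2:ℝ) ^ (i + 1))) (fun _ => (0:ℂ))
        ≤ ENNReal.ofReal 0 := by
      unfold variationNorm
      refine iSup_le fun N => iSup_le fun t => iSup_le fun _ => iSup_le fun _ => ?_
      simp [Real.zero_rpow]
    exact le_trans (hz.trans (by simp)) (zero_le)
  · have hvpos : 0 < ‖v‖ := norm_pos_iff.mpr hv
    have hνpos : 0 < ‖v‖ / 2 := by positivity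
    set Lder := C₀ * ‖w‖ * min (((‖v‖ / 2) ^ (n + 2))⁻¹) ((((2:ℝ) ^ i) ^ (n + 2))⁻¹) with hLdef
    have hminn : (0:ℝ) ≤ min (((‖v‖ / 2) ^ (n + 2))⁻¹) ((((2:ℝ) ^ i) ^ (n + 2))⁻¹) :=
      le_min (by positivity) (by positivity)
    have hLn : 0 ≤ Lder := by
      rw [hLdef]; exact mul_nonneg (mul_nonneg hC₀p.le (norm_nonneg w)) hminn
    have hAB : (2:ℝ) ^ i ≤ (2:ℝ) ^ (i + 1) := by rw [h2i1]; linarith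
    -- the uniform bound on the `r`-derivative
    have hKb : ∀ θ ∈ Set.Icc (0:ℝ) 1, ∀ r ∈ Set.Icc ((2:ℝ) ^ i) ((2:ℝ) ^ (i + 1)),
        ‖KK φ (v - θ • w) w r‖ ≤ Lder := by
      intro θ hθ r hr
      have hrpos : 0 < r := lt_of_lt_of_le h2i hr.1
      have hzν : ‖v‖ / 2 ≤ ‖v - θ • w‖ := (hcomp θ hθ).1
      refine (KK_le φ hCa1p.le hCa2p.le hCa1 hCa2 hCb1 hCb2 (v - θ • w) w hrpos hνpos hzν).trans ?_
      rw [hLdef]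
      have hmm : min (((‖v‖ / 2) ^ (n + 2))⁻¹) ((r ^ (n + 2))⁻¹)
          ≤ min (((‖v‖ / 2) ^ (n + 2))⁻¹) ((((2:ℝ) ^ i) ^ (n + 2))⁻¹) :=
        min_le_min le_rfl (inv_anti₀ (by positivity) (pow_le_pow_left₀ h2i.le hr.1 _))
      exact mul_le_mul_of_nonneg_left hmm (mul_nonneg hC₀p.le (norm_nonneg w))
    -- Lipschitz estimate for the family
    have halip : ∀ s ∈ Set.Ioc ((2:ℝ) ^ i) ((2:ℝ) ^ (i + 1)),
        ∀ t ∈ Set.Ioc ((2:ℝ) ^ i) ((2:ℝ) ^ (i + 1)), t ≤ s →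
        ‖((s ^ n : ℝ))⁻¹ • (φ (s⁻¹ • (x - y)) - φ (s⁻¹ • v))
          - ((t ^ n : ℝ))⁻¹ • (φ (t⁻¹ • (x - y)) - φ (t⁻¹ • v))‖ ≤ Lder * (s - t) := by
      intro s hs t ht hts
      have hspos : 0 < s := lt_trans h2i hs.1
      have htpos : 0 < t := lt_trans h2i ht.1
      have hsI : s ∈ Set.Icc ((2:ℝ) ^ i) ((2:ℝ) ^ (i + 1)) := ⟨hs.1.le, hs.2⟩
      have htI : t ∈ Set.Icc ((2:ℝ) ^ i) ((2:ℝ) ^ (i + 1)) := ⟨ht.1.le, ht.2⟩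
      -- step B : Lipschitz in r for fixed θ
      have hboundA : ∀ θ ∈ Set.Icc (0:ℝ) 1,
          ‖kk φ (v - θ • w) w t - kk φ (v - θ • w) w s‖ ≤ Lder * (s - t) := by
        intro θ hθ
        rw [norm_sub_rev]
        have hB := (convex_Icc ((2:ℝ) ^ i) ((2:ℝ) ^ (i + 1))).norm_image_sub_le_of_norm_hasDerivWithin_le
          (f := kk φ (v - θ • w) w) (f' := KK φ (v - θ • w) w)
          (fun r hr => (kk_hasDerivAt φ (v - θ • w) w (lt_of_lt_of_le h2i hr.1)).hasDerivWithinAt)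
          (fun r hr => hKb θ hθ r hr) htI hsI
        rwa [Real.norm_eq_abs, abs_of_nonneg (by linarith)] at hB
      -- step A : mean value in θ
      have hderA : ∀ θ ∈ Set.Icc (0:ℝ) 1,
          HasDerivWithinAt (fun θ : ℝ => (s ^ n : ℝ)⁻¹ • (φ (s⁻¹ • (v - θ • w)) : ℂ)
              - (t ^ n : ℝ)⁻¹ • (φ (t⁻¹ • (v - θ • w)) : ℂ))
            (kk φ (v - θ • w) w t - kk φ (v - θ • w) w s) (Set.Icc 0 1) θ := by
        intro θ _
        have h0 := (psi_hasDerivAt φ v w hspos θ).sub (psi_hasDerivAt φ v w htpos θ)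
        rw [neg_sub_neg] at h0
        exact h0.hasDerivWithinAt
      have hA := (convex_Icc (0:ℝ) 1).norm_image_sub_le_of_norm_hasDerivWithin_le
        hderA (fun θ hθ => hboundA θ hθ) (Set.left_mem_Icc.mpr zero_le_one)
        (Set.right_mem_Icc.mpr zero_le_one)
      have hxy' : x - y = v - w := by rw [hvdef, hwdef]; abel
      have hval : ((s ^ n : ℝ))⁻¹ • (φ (s⁻¹ • (x - y)) - φ (s⁻¹ • v))
            - ((t ^ n : ℝ))⁻¹ • (φ (t⁻¹ • (x - y)) - φ (t⁻¹ • v))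
          = ((fun θ : ℝ => (s ^ n : ℝ)⁻¹ • (φ (s⁻¹ • (v - θ • w)) : ℂ)
              - (t ^ n : ℝ)⁻¹ • (φ (t⁻¹ • (v - θ • w)) : ℂ)) 1)
            - ((fun θ : ℝ => (s ^ n : ℝ)⁻¹ • (φ (s⁻¹ • (v - θ • w)) : ℂ)
              - (t ^ n : ℝ)⁻¹ • (φ (t⁻¹ • (v - θ • w)) : ℂ)) 0) := by
        simp only [one_smul, zero_smul, sub_zero, hxy', smul_sub]
        abel
      rw [hval]
      refine hA.trans (le_of_eq ?_)
      rw [show ((1:ℝ) - 0) = 1 by ring, norm_one, mul_one]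
    have hvar := variationNorm_two_le_of_lip hAB hLn
      (fun t : ℝ => ((t ^ n : ℝ))⁻¹ • (φ (t⁻¹ • (x - y)) - φ (t⁻¹ • v))) halip
    refine hvar.trans (ENNReal.ofReal_le_ofReal ?_)
    -- final arithmetic
    have e1 : ‖v‖ ^ (-((n:ℝ) + 2)) = (‖v‖ ^ (n + 2 : ℕ))⁻¹ := by
      rw [show -((n:ℝ) + 2) = -((n + 2 : ℕ) : ℝ) by push_cast; ring,
        Real.rpow_neg (norm_nonneg _), Real.rpow_natCast]
    have e2 : (2:ℝ) ^ (-(i:ℝ) * ((n:ℝ) + 1)) = (((2:ℝ) ^ i) ^ (n + 1 : ℕ))⁻¹ := by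
      rw [show (-(i:ℝ) * ((n:ℝ) + 1)) = ((-(i * ((n + 1 : ℕ) : ℤ)) : ℤ) : ℝ) by push_cast; ring,
        Real.rpow_intCast, zpow_neg, zpow_mul, zpow_natCast]
    rw [e1, e2, hLdef]
    have hm2 : (2:ℝ) ^ (i + 1) - 2 ^ i = 2 ^ i := by rw [h2i1]; ring
    rw [hm2]
    set MT := min ((2:ℝ) ^ (i + 1) * (‖v‖ ^ (n + 2 : ℕ))⁻¹) ((((2:ℝ) ^ i) ^ (n + 1 : ℕ))⁻¹)
      with hMTdef
    have hMTn : 0 ≤ MT := le_min (by positivity) (by positivity)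
    have key : min (((‖v‖ / 2) ^ (n + 2))⁻¹) ((((2:ℝ) ^ i) ^ (n + 2))⁻¹) * 2 ^ i
        ≤ 2 ^ (n + 2) * MT := by
      rw [hMTdef]
      rw [mul_min_of_nonneg _ _ (by positivity : (0:ℝ) ≤ 2 ^ (n + 2))]
      refine le_min ?_ ?_
      · refine le_trans (mul_le_mul_of_nonneg_right (min_le_left _ _) h2i.le) ?_
        have hEq : (2:ℝ) ^ (n + 2) * ((2:ℝ) ^ (i + 1) * (‖v‖ ^ (n + 2 : ℕ))⁻¹)
            = 2 * (((‖v‖ / 2) ^ (n + 2))⁻¹ * 2 ^ i) := by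
          rw [h2i1, div_pow]
          field_simp
        rw [hEq]
        have hpos0 : (0:ℝ) ≤ ((‖v‖ / 2) ^ (n + 2))⁻¹ * 2 ^ i := by positivity
        linarith
      · refine le_trans (mul_le_mul_of_nonneg_right (min_le_right _ _) h2i.le) ?_
        have hEq : (((2:ℝ) ^ i) ^ (n + 2))⁻¹ * 2 ^ i = (((2:ℝ) ^ i) ^ (n + 1 : ℕ))⁻¹ := by
          rw [pow_succ]
          field_simp
        rw [hEq]
        have hone : (1:ℝ) ≤ 2 ^ (n + 2) := by
          have h := pow_le_pow_left₀ (by norm_num : (0:ℝ) ≤ 1) (by norm_num : (1:ℝ) ≤ 2) (n + 2)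
          simpa using h
        nlinarith [inv_nonneg.mpr (pow_nonneg h2i.le (n + 1))]
    calc C₀ * ‖w‖ * min (((‖v‖ / 2) ^ (n + 2))⁻¹) ((((2:ℝ) ^ i) ^ (n + 2))⁻¹) * 2 ^ i
        = C₀ * ‖w‖ * (min (((‖v‖ / 2) ^ (n + 2))⁻¹) ((((2:ℝ) ^ i) ^ (n + 2))⁻¹) * 2 ^ i) := by
          ring
      _ ≤ C₀ * ‖w‖ * (2 ^ (n + 2) * MT) :=
          mul_le_mul_of_nonneg_left key (mul_nonneg hC₀p.le (norm_nonneg w))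
      _ = (C₀ * 2 ^ (n + 2)) * ‖w‖ * MT := by ring
      _ ≤ (C₀ * 2 ^ (n + 2) + 1) * ‖w‖ * MT := by
          refine mul_le_mul_of_nonneg_right
            (mul_le_mul_of_nonneg_right (by linarith) (norm_nonneg w)) hMTn
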